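/- Let s ∈ (6/5, 2). If γ : ℝ³ → ℝ satisfies 0 ≤ γ ≤ κ, ∫γ ≤ C and ∫ p²γ(p)dp ≤ C, and α satisfies α² ≤ γ² + γ, then ‖α‖_{L^s(ℝ³)} is bounded by a constant depending only on s, κ, C. -/

import Mathlib

open MeasureTheory
open scoped ENNReal NNReal

abbrev E3 := EuclideanSpace ℝ (Fin 3)

lemma aux_sqrt_add (x y : ℝ) (hx : 0 ≤ x) (hy : 0 ≤ y) :
    Real.sqrt (x + y) ≤ Real.sqrt x + Real.sqrt y := by
  have h : x + y ≤ (Real.sqrt x + Real.sqrt y) ^ 2 := by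
    have hx' := Real.sq_sqrt hx
    have hy' := Real.sq_sqrt hy
    nlinarith [Real.sqrt_nonneg x, Real.sqrt_nonneg y]
  calc Real.sqrt (x + y) ≤ Real.sqrt ((Real.sqrt x + Real.sqrt y) ^ 2) := Real.sqrt_le_sqrt h
    _ = Real.sqrt x + Real.sqrt y := Real.sqrt_sq (by positivity)

lemma aux_I_fin {s : ℝ} (hs1 : 6 / 5 < s) (hs2 : s < 2) :
    (∫⁻ p in (Metric.ball (0 : E3) 1)ᶜ,
      ENNReal.ofReal (‖p‖ ^ (-(2 * s / (2 - s)))) ∂(volume : Measure E3)) < ∞ := by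
  set r : ℝ := 2 * s / (2 - s) with hrdef
  have h2s : (0 : ℝ) < 2 - s := by linarith
  have hr3 : (3 : ℝ) < r := by rw [hrdef, lt_div_iff₀ h2s]; nlinarith
  have hr0 : (0 : ℝ) < r := by linarith
  have hmeas : Measurable fun p : E3 => ENNReal.ofReal ((2 : ℝ) ^ r * (1 + ‖p‖) ^ (-r)) := by
    fun_prop
  calc (∫⁻ p in (Metric.ball (0 : E3) 1)ᶜ, ENNReal.ofReal (‖p‖ ^ (-r)) ∂(volume : Measure E3))
      ≤ ∫⁻ p in (Metric.ball (0 : E3) 1)ᶜ,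
          ENNReal.ofReal ((2 : ℝ) ^ r * (1 + ‖p‖) ^ (-r)) ∂(volume : Measure E3) := by
        refine setLIntegral_mono hmeas ?_
        intro p hp
        have hp1 : (1 : ℝ) ≤ ‖p‖ := by
          simpa [Metric.mem_ball, dist_zero_right] using hp
        have hp0 : (0 : ℝ) < ‖p‖ := by linarith
        apply ENNReal.ofReal_le_ofReal
        have hA : (0 : ℝ) < ‖p‖ ^ r := Real.rpow_pos_of_pos hp0 r
        have hB : (0 : ℝ) < (1 + ‖p‖) ^ r := Real.rpow_pos_of_pos (by linarith) r
        have h1 : (1 + ‖p‖) ^ r ≤ (2 : ℝ) ^ r * ‖p‖ ^ r := by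
          rw [← Real.mul_rpow (by norm_num) hp0.le]
          exact Real.rpow_le_rpow (by linarith) (by linarith) hr0.le
        rw [Real.rpow_neg (norm_nonneg p), Real.rpow_neg (by linarith : (0 : ℝ) ≤ 1 + ‖p‖),
          inv_eq_one_div, ← div_eq_mul_inv, div_le_div_iff₀ hA hB]
        linarith
    _ ≤ ∫⁻ p, ENNReal.ofReal ((2 : ℝ) ^ r * (1 + ‖p‖) ^ (-r)) ∂(volume : Measure E3) :=
        setLIntegral_le_lintegral _ _
    _ = ENNReal.ofReal ((2 : ℝ) ^ r)
        * ∫⁻ p : E3, ENNReal.ofReal ((1 + ‖p‖) ^ (-r)) ∂(volume : Measure E3) := by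
        simp_rw [ENNReal.ofReal_mul (by positivity : (0 : ℝ) ≤ (2 : ℝ) ^ r)]
        exact lintegral_const_mul' _ _ ENNReal.ofReal_ne_top
    _ < ∞ := ENNReal.mul_lt_top ENNReal.ofReal_lt_top
        (finite_integral_one_add_norm (by rw [finrank_euclideanSpace_fin]; exact hr3))

theorem stmt_7 (s : ℝ) (hs : s ∈ Set.Ioo (6 / 5 : ℝ) 2) (κ C : ℝ) :
    ∃ C' : ℝ, ∀ γ α : E3 → ℝ,
      (∀ p, 0 ≤ γ p) → (∀ p, γ p ≤ κ) →
      (∫ p, γ p) ≤ C → (∫ p, ‖p‖ ^ 2 * γ p) ≤ C →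
      Integrable γ (volume : Measure E3) →
      Integrable (fun p => ‖p‖ ^ 2 * γ p) (volume : Measure E3) →
      (∀ p, (α p) ^ 2 ≤ (γ p) ^ 2 + γ p) →
      eLpNorm α (ENNReal.ofReal s) (volume : Measure E3) ≤ ENNReal.ofReal C' := by
  obtain ⟨hs1, hs2⟩ := hs
  have hs0 : (0 : ℝ) < s := by linarith
  have hsne : s ≠ 0 := hs0.ne'
  have hs1' : (1 : ℝ) ≤ s := by linarith
  have h2s : (0 : ℝ) < 2 - s := by linarith
  set S : Set E3 := Metric.ball (0 : E3) 1 with hS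
  set I : ℝ≥0∞ := ∫⁻ p in Sᶜ, ENNReal.ofReal (‖p‖ ^ (-(2 * s / (2 - s)))) ∂(volume : Measure E3)
    with hIdef
  have hIfin : I < ∞ := aux_I_fin hs1 hs2
  set B : ℝ≥0∞ := (ENNReal.ofReal κ ^ (s - 1) * ENNReal.ofReal C) ^ (1 / s)
    + (ENNReal.ofReal κ ^ (s / 2) * volume S
       + ENNReal.ofReal C ^ (s / 2) * I ^ ((2 - s) / 2)) ^ (1 / s) with hBdef
  have hBne : B ≠ ∞ := by
    rw [hBdef]
    refine ENNReal.add_ne_top.2 ⟨?_, ?_⟩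
    · exact ENNReal.rpow_ne_top_of_nonneg (by positivity)
        (ENNReal.mul_ne_top
          (ENNReal.rpow_ne_top_of_nonneg (by linarith) ENNReal.ofReal_ne_top)
          ENNReal.ofReal_ne_top)
    · refine ENNReal.rpow_ne_top_of_nonneg (by positivity) (ENNReal.add_ne_top.2 ⟨?_, ?_⟩)
      · exact ENNReal.mul_ne_top
          (ENNReal.rpow_ne_top_of_nonneg (by positivity) ENNReal.ofReal_ne_top)
          measure_ball_lt_top.ne
      · exact ENNReal.mul_ne_top
          (ENNReal.rpow_ne_top_of_nonneg (by positivity) ENNReal.ofReal_ne_top)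
          (ENNReal.rpow_ne_top_of_nonneg (by positivity) hIfin.ne)
  refine ⟨B.toReal, fun γ α h0 h1 hiC hi2C hint hint2 hα => ?_⟩
  rw [ENNReal.ofReal_toReal hBne]
  have hP0 : (ENNReal.ofReal s) ≠ 0 := by
    simp only [ne_eq, ENNReal.ofReal_eq_zero, not_le]; linarith
  have hPtop : (ENNReal.ofReal s) ≠ ∞ := ENNReal.ofReal_ne_top
  have hP1 : (1 : ℝ≥0∞) ≤ ENNReal.ofReal s := by
    rw [← ENNReal.ofReal_one]; exact ENNReal.ofReal_le_ofReal hs1'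
  have hγm : AEStronglyMeasurable γ (volume : Measure E3) := hint.aestronglyMeasurable
  have hsqm : AEStronglyMeasurable (fun p => Real.sqrt (γ p)) (volume : Measure E3) :=
    Real.continuous_sqrt.comp_aestronglyMeasurable hγm
  -- Step A : pointwise bound
  have stepA : eLpNorm α (ENNReal.ofReal s) (volume : Measure E3) ≤
      eLpNorm (fun p => γ p + Real.sqrt (γ p)) (ENNReal.ofReal s) (volume : Measure E3) := by
    apply eLpNorm_mono
    intro p
    rw [Real.norm_eq_abs, Real.norm_eq_abs]
    have h2 : |α p| ≤ γ p + Real.sqrt (γ p) := by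
      have h3 := Real.sqrt_le_sqrt (hα p)
      rw [Real.sqrt_sq_eq_abs] at h3
      refine h3.trans ?_
      refine (aux_sqrt_add _ _ (sq_nonneg _) (h0 p)).trans ?_
      rw [Real.sqrt_sq (h0 p)]
    exact h2.trans (le_abs_self _)
  -- Step B : triangle inequality
  have stepB : eLpNorm (fun p => γ p + Real.sqrt (γ p)) (ENNReal.ofReal s) (volume : Measure E3) ≤
      eLpNorm γ (ENNReal.ofReal s) (volume : Measure E3)
      + eLpNorm (fun p => Real.sqrt (γ p)) (ENNReal.ofReal s) (volume : Measure E3) :=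
    eLpNorm_add_le hγm hsqm hP1
  -- lintegral of γ
  have hγlint : (∫⁻ p, ENNReal.ofReal (γ p) ∂(volume : Measure E3)) ≤ ENNReal.ofReal C := by
    rw [← ofReal_integral_eq_lintegral_ofReal hint (Filter.Eventually.of_forall h0)]
    exact ENNReal.ofReal_le_ofReal hiC
  -- Step C : bound on eLpNorm γ
  have stepC : eLpNorm γ (ENNReal.ofReal s) (volume : Measure E3) ≤
      (ENNReal.ofReal κ ^ (s - 1) * ENNReal.ofReal C) ^ (1 / s) := by
    rw [eLpNorm_eq_lintegral_rpow_enorm_toReal hP0 hPtop, ENNReal.toReal_ofReal hs0.le]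
    refine ENNReal.rpow_le_rpow ?_ (by positivity)
    calc (∫⁻ p, (‖γ p‖₊ : ℝ≥0∞) ^ s ∂(volume : Measure E3))
        ≤ ∫⁻ p, ENNReal.ofReal κ ^ (s - 1) * ENNReal.ofReal (γ p) ∂(volume : Measure E3) := by
          refine lintegral_mono fun p => ?_
          rw [← enorm_eq_nnnorm, Real.enorm_eq_ofReal (h0 p)]
          calc ENNReal.ofReal (γ p) ^ s
              = ENNReal.ofReal (γ p) ^ (s - 1) * ENNReal.ofReal (γ p) ^ (1 : ℝ) := by
                rw [← ENNReal.rpow_add_of_nonneg _ _ (by linarith) zero_le_one]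
                norm_num
            _ ≤ ENNReal.ofReal κ ^ (s - 1) * ENNReal.ofReal (γ p) := by
                rw [ENNReal.rpow_one]
                exact mul_le_mul_left
                  (ENNReal.rpow_le_rpow (ENNReal.ofReal_le_ofReal (h1 p)) (by linarith)) _
      _ = ENNReal.ofReal κ ^ (s - 1) * ∫⁻ p, ENNReal.ofReal (γ p) ∂(volume : Measure E3) :=
          lintegral_const_mul' _ _
            (ENNReal.rpow_ne_top_of_nonneg (by linarith) ENNReal.ofReal_ne_top)
      _ ≤ ENNReal.ofReal κ ^ (s - 1) * ENNReal.ofReal C := mul_le_mul_right hγlint _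
  -- Step D : bound on eLpNorm √γ
  set F : E3 → ℝ≥0∞ := S.indicator (fun _ => ENNReal.ofReal κ ^ (s / 2)) with hFdef
  set g : E3 → ℝ≥0∞ := Sᶜ.indicator (fun q => ENNReal.ofReal (‖q‖ ^ (-s))) with hgdef
  set f : E3 → ℝ≥0∞ := fun p => ENNReal.ofReal (‖p‖ ^ 2 * γ p) ^ (s / 2) with hfdef
  have hpoint : ∀ p, ENNReal.ofReal (γ p) ^ (s / 2) ≤ F p + f p * g p := by
    intro p
    by_cases hp : p ∈ S
    · calc ENNReal.ofReal (γ p) ^ (s / 2) ≤ ENNReal.ofReal κ ^ (s / 2) :=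
            ENNReal.rpow_le_rpow (ENNReal.ofReal_le_ofReal (h1 p)) (by positivity)
        _ = F p := by rw [hFdef, Set.indicator_of_mem hp]
        _ ≤ F p + f p * g p := le_self_add
    · have hp1 : (1 : ℝ) ≤ ‖p‖ := by
        simpa [hS, Metric.mem_ball, dist_zero_right] using hp
      have hp0 : (0 : ℝ) < ‖p‖ := by linarith
      have key : ENNReal.ofReal (γ p) ^ (s / 2) = f p * g p := by
        rw [hfdef, hgdef, Set.indicator_of_mem (Set.mem_compl hp)]
        have hγeq : γ p = (‖p‖ ^ 2 * γ p) * ‖p‖ ^ (-(2 : ℝ)) := by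
          rw [Real.rpow_neg (norm_nonneg p),
            show ((2 : ℝ)) = ((2 : ℕ) : ℝ) by norm_num, Real.rpow_natCast]
          field_simp
        calc ENNReal.ofReal (γ p) ^ (s / 2)
            = (ENNReal.ofReal (‖p‖ ^ 2 * γ p) * ENNReal.ofReal (‖p‖ ^ (-(2 : ℝ)))) ^ (s / 2) := by
              rw [← ENNReal.ofReal_mul (mul_nonneg (by positivity) (h0 p)), ← hγeq]
          _ = ENNReal.ofReal (‖p‖ ^ 2 * γ p) ^ (s / 2)
              * ENNReal.ofReal (‖p‖ ^ (-(2 : ℝ))) ^ (s / 2) :=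
              ENNReal.mul_rpow_of_nonneg _ _ (by linarith : (0 : ℝ) ≤ s / 2)
          _ = ENNReal.ofReal (‖p‖ ^ 2 * γ p) ^ (s / 2) * ENNReal.ofReal (‖p‖ ^ (-s)) := by
              congr 1
              rw [ENNReal.ofReal_rpow_of_nonneg
                (Real.rpow_nonneg (norm_nonneg p) _) (by linarith : (0 : ℝ) ≤ s / 2),
                ← Real.rpow_mul (norm_nonneg p),
                show -(2 : ℝ) * (s / 2) = -s by ring]
      rw [key]
      exact le_add_self
  have hFm : Measurable F := by
    rw [hFdef]; exact measurable_const.indicator Metric.isOpen_ball.measurableSet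
  have hfm : AEMeasurable f (volume : Measure E3) := by
    rw [hfdef]
    exact (hint2.aemeasurable.ennreal_ofReal).pow_const _
  have hgm : Measurable g := by
    rw [hgdef]
    exact Measurable.indicator (by fun_prop) Metric.isOpen_ball.measurableSet.compl
  have hpq : Real.HolderConjugate (2 / s) (2 / (2 - s)) := by
    refine Real.holderConjugate_iff.mpr ⟨?_, ?_⟩
    · rw [lt_div_iff₀ hs0]; linarith
    · rw [inv_div, inv_div]; ring
  have hf2 : (∫⁻ p, f p ^ (2 / s) ∂(volume : Measure E3)) ≤ ENNReal.ofReal C := by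
    have heq : ∀ p, f p ^ (2 / s) = ENNReal.ofReal (‖p‖ ^ 2 * γ p) := by
      intro p
      rw [hfdef, ← ENNReal.rpow_mul, show s / 2 * (2 / s) = 1 by field_simp, ENNReal.rpow_one]
    simp_rw [heq]
    rw [← ofReal_integral_eq_lintegral_ofReal hint2
      (Filter.Eventually.of_forall fun p => mul_nonneg (by positivity) (h0 p))]
    exact ENNReal.ofReal_le_ofReal hi2C
  have hg2 : (∫⁻ p, g p ^ (2 / (2 - s)) ∂(volume : Measure E3)) = I := by
    have heq : ∀ p, g p ^ (2 / (2 - s))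
        = Sᶜ.indicator (fun q => ENNReal.ofReal (‖q‖ ^ (-(2 * s / (2 - s))))) p := by
      intro p
      rw [hgdef]
      by_cases hp : p ∈ Sᶜ
      · rw [Set.indicator_of_mem hp, Set.indicator_of_mem hp,
          ENNReal.ofReal_rpow_of_nonneg (Real.rpow_nonneg (norm_nonneg p) _)
            (le_of_lt (div_pos two_pos h2s)),
          ← Real.rpow_mul (norm_nonneg p),
          show -s * (2 / (2 - s)) = -(2 * s / (2 - s)) by ring]
      · rw [Set.indicator_of_notMem hp, Set.indicator_of_notMem hp,
          ENNReal.zero_rpow_of_pos (div_pos two_pos h2s)]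
    simp_rw [heq]
    rw [hIdef, lintegral_indicator Metric.isOpen_ball.measurableSet.compl]
  have hsqlint : (∫⁻ p, (‖Real.sqrt (γ p)‖₊ : ℝ≥0∞) ^ s ∂(volume : Measure E3)) ≤
      ENNReal.ofReal κ ^ (s / 2) * volume S + ENNReal.ofReal C ^ (s / 2) * I ^ ((2 - s) / 2) := by
    have heq : ∀ p, (‖Real.sqrt (γ p)‖₊ : ℝ≥0∞) ^ s = ENNReal.ofReal (γ p) ^ (s / 2) := by
      intro p
      rw [← enorm_eq_nnnorm, Real.enorm_eq_ofReal (Real.sqrt_nonneg _), Real.sqrt_eq_rpow,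
        ← ENNReal.ofReal_rpow_of_nonneg (h0 p) (by norm_num : (0:ℝ) ≤ 1 / 2),
        ← ENNReal.rpow_mul, show 1 / 2 * s = s / 2 by ring]
    simp_rw [heq]
    calc (∫⁻ p, ENNReal.ofReal (γ p) ^ (s / 2) ∂(volume : Measure E3))
        ≤ ∫⁻ p, (F p + f p * g p) ∂(volume : Measure E3) := lintegral_mono hpoint
      _ = (∫⁻ p, F p ∂(volume : Measure E3)) + ∫⁻ p, f p * g p ∂(volume : Measure E3) :=
          lintegral_add_left hFm _
      _ ≤ ENNReal.ofReal κ ^ (s / 2) * volume S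
          + ENNReal.ofReal C ^ (s / 2) * I ^ ((2 - s) / 2) := by
          refine add_le_add ?_ ?_
          · rw [hFdef, lintegral_indicator_const Metric.isOpen_ball.measurableSet]
          · calc (∫⁻ p, f p * g p ∂(volume : Measure E3))
                = ∫⁻ p, (f * g) p ∂(volume : Measure E3) := rfl
              _ ≤ (∫⁻ p, f p ^ (2 / s) ∂(volume : Measure E3)) ^ (1 / (2 / s))
                  * (∫⁻ p, g p ^ (2 / (2 - s)) ∂(volume : Measure E3)) ^ (1 / (2 / (2 - s))) :=
                  ENNReal.lintegral_mul_le_Lp_mul_Lq _ hpq hfm hgm.aemeasurable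
              _ ≤ ENNReal.ofReal C ^ (s / 2) * I ^ ((2 - s) / 2) := by
                  rw [hg2, one_div_div, one_div_div]
                  exact mul_le_mul_left (ENNReal.rpow_le_rpow hf2 (by positivity)) _
  have stepD : eLpNorm (fun p => Real.sqrt (γ p)) (ENNReal.ofReal s) (volume : Measure E3) ≤
      (ENNReal.ofReal κ ^ (s / 2) * volume S
        + ENNReal.ofReal C ^ (s / 2) * I ^ ((2 - s) / 2)) ^ (1 / s) := by
    rw [eLpNorm_eq_lintegral_rpow_enorm_toReal hP0 hPtop, ENNReal.toReal_ofReal hs0.le]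
    exact ENNReal.rpow_le_rpow hsqlint (by positivity)
  calc eLpNorm α (ENNReal.ofReal s) (volume : Measure E3)
      ≤ _ := stepA
    _ ≤ _ := stepB
    _ ≤ B := by rw [hBdef]; exact add_le_add stepC stepD
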